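/- Let r ≥ 0, a > 0, b ∈ ℝ, γ ≥ 0, δ ∈ ℝ. Let P be a nonzero polynomial with real coefficients such that every complex root of P lies in the strip S(r) = {w ∈ ℂ : |Im w| ≤ r}, and define f : ℂ → ℂ by f(z) = exp(δz - γz²)·P(z). Let H(z) = e^{ib}·f(z + ia) - e^{-ib}·f(z - ia) (which equals 2i·sin(aD + b)f(z)). If H is not identically zero, then every zero z of H satisfies (Im z)² ≤ max(r² - a², 0). -/

import Mathlib

open Complex Polynomial

lemma mprod_lt {s : Multiset ℂ} (hs : s ≠ 0) {F G : ℂ → ℝ}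
    (h0 : ∀ x ∈ s, 0 ≤ F x) (h : ∀ x ∈ s, F x < G x) :
    (s.map F).prod < (s.map G).prod := by
  induction s using Multiset.induction_on with
  | empty => exact absurd rfl hs
  | cons a t ih =>
    rcases eq_or_ne t 0 with rfl | ht
    · simpa using h a (Multiset.mem_cons_self a 0)
    · simp only [Multiset.map_cons, Multiset.prod_cons]
      exact mul_lt_mul'' (h a (Multiset.mem_cons_self a t))
        (ih ht (fun x hx => h0 x (Multiset.mem_cons_of_mem hx))
          (fun x hx => h x (Multiset.mem_cons_of_mem hx)))
        (h0 a (Multiset.mem_cons_self a t))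
        (Multiset.prod_nonneg (by
          intro x hx
          simp only [Multiset.mem_map] at hx
          obtain ⟨w, hw, rfl⟩ := hx
          exact h0 w (Multiset.mem_cons_of_mem hw)))

lemma key_strip (r a b γ δ : ℝ) (ha : 0 < a) (hγ : 0 ≤ γ)
    (P : Polynomial ℝ) (hP : P ≠ 0)
    (hroots : ∀ w : ℂ, Polynomial.aeval w P = 0 → |w.im| ≤ r)
    (f H : ℂ → ℂ)
    (hf : ∀ z : ℂ, f z = Complex.exp ((δ : ℂ) * z - (γ : ℂ) * z ^ 2) * Polynomial.aeval z P)
    (hH : ∀ z : ℂ, H z = Complex.exp ((b : ℂ) * Complex.I) * f (z + a * Complex.I)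
        - Complex.exp (-((b : ℂ) * Complex.I)) * f (z - a * Complex.I))
    (hside : (P.map (algebraMap ℝ ℂ)).roots ≠ 0 ∨ 0 < γ)
    (z : ℂ) (hy : 0 < z.im) (hya : r ^ 2 < z.im ^ 2 + a ^ 2) : H z ≠ 0 := by
  set Q : Polynomial ℂ := P.map (algebraMap ℝ ℂ) with hQdef
  have hQ0 : Q ≠ 0 := by
    simpa [hQdef] using (Polynomial.map_ne_zero_iff (algebraMap ℝ ℂ).injective).mpr hP
  have hsplit : Q.Splits := IsAlgClosed.splits Q
  have heval : ∀ ζ : ℂ, Polynomial.aeval ζ P = Q.eval ζ := by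
    intro ζ; rw [aeval_def, hQdef, eval_map]
  have hfact := hsplit.eq_prod_roots
  have heval2 : ∀ ζ : ℂ, Q.eval ζ = Q.leadingCoeff * (Q.roots.map fun w => ζ - w).prod := by
    intro ζ
    conv_lhs => rw [hfact]
    rw [eval_mul, eval_C, eval_multiset_prod, Multiset.map_map]
    simp [Function.comp]
  have hconjQ : Q.map (starRingEnd ℂ) = Q := by
    rw [hQdef, Polynomial.map_map]
    congr 1
    ext x
    simp [Complex.conj_ofReal]
  have hrootsconj : Q.roots.map (starRingEnd ℂ) = Q.roots := by
    rw [← hsplit.roots_map (starRingEnd ℂ), hconjQ]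
  have hnsq : ∀ ζ : ℂ, Complex.normSq (Q.eval ζ)
      = Complex.normSq Q.leadingCoeff * (Q.roots.map fun w => Complex.normSq (ζ - w)).prod := by
    intro ζ
    rw [heval2, map_mul, map_multiset_prod, Multiset.map_map]
    rfl
  -- bound on roots
  have hrb : ∀ w ∈ Q.roots, |w.im| ≤ r := by
    intro w hw
    exact hroots w (by rw [heval]; exact (Polynomial.isRoot_of_mem_roots hw))
  -- per-root pair strict inequality
  have hpair : ∀ w ∈ Q.roots,
      Complex.normSq (z - ↑a*I - w) * Complex.normSq (z - ↑a*I - (starRingEnd ℂ) w)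
        < Complex.normSq (z + ↑a*I - w) * Complex.normSq (z + ↑a*I - (starRingEnd ℂ) w) := by
    intro w hw
    have hwr := hrb w hw
    have hw2 : w.im^2 ≤ r^2 := by nlinarith [abs_nonneg w.im, _root_.sq_abs w.im]
    have h1 : 0 < a * z.im := mul_pos ha hy
    have h2 : 0 < a * z.im * (z.im^2 + a^2 - w.im^2) := by
      apply mul_pos h1; nlinarith
    simp only [Complex.normSq_apply, Complex.sub_re, Complex.sub_im, Complex.add_re,
      Complex.add_im, Complex.mul_re, Complex.mul_im, Complex.ofReal_re, Complex.ofReal_im,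
      Complex.I_re, Complex.I_im, Complex.conj_re, Complex.conj_im]
    nlinarith [sq_nonneg (z.re - w.re), mul_nonneg h1.le (sq_nonneg (z.re - w.re)), h2]
  set Mm : ℝ := (Q.roots.map fun w => Complex.normSq (z - ↑a*I - w)).prod with hMm
  set Mp : ℝ := (Q.roots.map fun w => Complex.normSq (z + ↑a*I - w)).prod with hMp
  have hMmnn : 0 ≤ Mm := Multiset.prod_nonneg (by
    intro x hx; simp only [Multiset.mem_map] at hx
    obtain ⟨w, hw, rfl⟩ := hx; exact Complex.normSq_nonneg _)
  have hMpnn : 0 ≤ Mp := Multiset.prod_nonneg (by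
    intro x hx; simp only [Multiset.mem_map] at hx
    obtain ⟨w, hw, rfl⟩ := hx; exact Complex.normSq_nonneg _)
  -- squares via conjugate pairing
  have hsqM : ∀ ζ : ℂ, ((Q.roots.map fun w => Complex.normSq (ζ - w)).prod) ^ 2
      = (Q.roots.map fun w =>
          Complex.normSq (ζ - w) * Complex.normSq (ζ - (starRingEnd ℂ) w)).prod := by
    intro ζ
    rw [Multiset.prod_map_mul, sq]
    congr 1
    conv_lhs => rw [← hrootsconj]
    rw [Multiset.map_map]
    rfl
  -- Mm ≤ Mp, strict if roots nonempty
  have hMle : Q.roots ≠ 0 → Mm < Mp := by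
    intro hne
    have hsq : Mm ^ 2 < Mp ^ 2 := by
      rw [hMm, hMp, hsqM, hsqM]
      exact mprod_lt hne
        (fun w hw => mul_nonneg (Complex.normSq_nonneg _) (Complex.normSq_nonneg _))
        hpair
    nlinarith
  -- abs of f values
  have habsf : ∀ ζ : ℂ, ‖f ζ‖
      = Real.exp (((δ : ℂ) * ζ - (γ : ℂ) * ζ ^ 2).re) * ‖Q.eval ζ‖ := by
    intro ζ
    rw [hf, norm_mul, Complex.norm_exp, heval]
  -- exp real parts
  have hre : (((δ : ℂ) * (z - (a:ℂ)*I) - (γ : ℂ) * (z - (a:ℂ)*I) ^ 2).re)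
      = (((δ : ℂ) * (z + (a:ℂ)*I) - (γ : ℂ) * (z + (a:ℂ)*I) ^ 2).re) - 4*γ*a*z.im := by
    simp only [Complex.sub_re, Complex.mul_re, Complex.mul_im, Complex.add_re, Complex.add_im,
      Complex.sub_im, Complex.ofReal_re, Complex.ofReal_im, Complex.I_re, Complex.I_im,
      pow_two]
    ring
  have h4 : 0 ≤ 4*γ*a*z.im := by positivity
  -- abs eval comparison, squared: abs² = normSq lc * M
  have habsev : ∀ ζ : ℂ, (‖Q.eval ζ‖)^2 = Complex.normSq (Q.eval ζ) :=
    fun ζ => Complex.sq_norm _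
  set zp : ℂ := z + (a:ℂ)*I with hzp
  set zm : ℂ := z - (a:ℂ)*I with hzm
  set Rp : ℝ := ((δ:ℂ)*zp - (γ:ℂ)*zp^2).re with hRp
  have hlt : ‖f zm‖ < ‖f zp‖ := by
    rw [habsf, habsf, hre]
    rcases eq_or_ne Q.roots 0 with h0 | hne
    · -- roots empty: abs of evals equal & positive, γ > 0
      have hγpos : 0 < γ := by
        rcases hside with h | h
        · exact absurd h0 h
        · exact h
      have heq : Q.eval zm = Q.leadingCoeff ∧ Q.eval zp = Q.leadingCoeff := by
        constructor <;> · rw [heval2, h0]; simp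
      rw [heq.1, heq.2]
      have hlc : ‖Q.leadingCoeff‖ ≠ 0 := by
        simp [Polynomial.leadingCoeff_ne_zero.mpr hQ0]
      have hlcpos : 0 < ‖Q.leadingCoeff‖ :=
        lt_of_le_of_ne (norm_nonneg _) (Ne.symm hlc)
      have hexp : Real.exp (Rp - 4*γ*a*z.im) < Real.exp Rp := by
        apply Real.exp_lt_exp.mpr
        have : 0 < 4*γ*a*z.im := by positivity
        linarith
      exact mul_lt_mul_of_pos_right hexp hlcpos
    · -- roots nonempty
      have hMlt := hMle hne
      have hplt : ‖Q.eval zm‖ < ‖Q.eval zp‖ := by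
        have h1 : (‖Q.eval zm‖)^2 < (‖Q.eval zp‖)^2 := by
          rw [habsev, habsev, hnsq, hnsq]
          have hlcpos : 0 < Complex.normSq Q.leadingCoeff := by
            rw [Complex.normSq_pos]
            exact Polynomial.leadingCoeff_ne_zero.mpr hQ0
          exact mul_lt_mul_of_pos_left hMlt hlcpos
        nlinarith [norm_nonneg (Q.eval zm), norm_nonneg (Q.eval zp)]
      calc Real.exp (Rp - 4*γ*a*z.im) * ‖Q.eval zm‖
          < Real.exp (Rp - 4*γ*a*z.im) * ‖Q.eval zp‖ :=
            mul_lt_mul_of_pos_left hplt (Real.exp_pos _)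
        _ ≤ Real.exp Rp * ‖Q.eval zp‖ := by
            apply mul_le_mul_of_nonneg_right _ (norm_nonneg _)
            apply Real.exp_le_exp.mpr
            linarith
  -- conclude
  intro hz0
  rw [hH] at hz0
  have heqv : Complex.exp ((b:ℂ)*I) * f zp = Complex.exp (-((b:ℂ)*I)) * f zm := by
    rw [hzp, hzm]; exact sub_eq_zero.mp hz0
  have habseq := congrArg (fun x : ℂ => ‖x‖) heqv
  rw [norm_mul, norm_mul, Complex.norm_exp, Complex.norm_exp] at habseq
  simp only [Complex.mul_re, Complex.neg_re, Complex.ofReal_re, Complex.ofReal_im,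
    Complex.I_re, Complex.I_im] at habseq
  norm_num at habseq
  rw [habseq] at hlt
  exact lt_irrefl _ hlt

theorem sin_operator_strip_decrease (r a b γ δ : ℝ) (hr : 0 ≤ r) (ha : 0 < a) (hγ : 0 ≤ γ)
    (P : Polynomial ℝ) (hP : P ≠ 0)
    (hroots : ∀ w : ℂ, Polynomial.aeval w P = 0 → |w.im| ≤ r)
    (f H : ℂ → ℂ)
    (hf : ∀ z : ℂ, f z = Complex.exp ((δ : ℂ) * z - (γ : ℂ) * z ^ 2) * Polynomial.aeval z P)
    (hH : ∀ z : ℂ, H z = Complex.exp ((b : ℂ) * Complex.I) * f (z + a * Complex.I)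
        - Complex.exp (-((b : ℂ) * Complex.I)) * f (z - a * Complex.I))
    (hH0 : ∃ z : ℂ, H z ≠ 0) :
    ∀ z : ℂ, H z = 0 → z.im ^ 2 ≤ max (r ^ 2 - a ^ 2) 0 := by
  intro z hz
  by_contra hcon
  push_neg at hcon
  have hy2 : 0 < z.im ^ 2 := lt_of_le_of_lt (le_max_right _ _) hcon
  have hya : r ^ 2 < z.im ^ 2 + a ^ 2 := by
    have := lt_of_le_of_lt (le_max_left (r ^ 2 - a ^ 2) 0) hcon; linarith
  have hyne : z.im ≠ 0 := by
    intro h; rw [h] at hy2; simp at hy2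
  by_cases hd : (P.map (algebraMap ℝ ℂ)).roots = 0 ∧ γ = 0
  · -- degenerate case: P constant (no roots) and γ = 0
    obtain ⟨h0, hγ0⟩ := hd
    set Q : Polynomial ℂ := P.map (algebraMap ℝ ℂ) with hQdef
    have hQ0 : Q ≠ 0 := by
      simpa [hQdef] using (Polynomial.map_ne_zero_iff (algebraMap ℝ ℂ).injective).mpr hP
    have hsplit : Q.Splits := IsAlgClosed.splits Q
    have hfact := hsplit.eq_prod_roots
    have haec : ∀ ζ : ℂ, Polynomial.aeval ζ P = Q.leadingCoeff := by
      intro ζ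
      rw [aeval_def, ← eval_map, ← hQdef]
      conv_lhs => rw [hfact]
      rw [h0]
      simp
    have hγc : (γ : ℂ) = 0 := by rw [hγ0]; norm_num
    set K : ℂ := Complex.exp ((b:ℂ)*I) * Complex.exp ((δ:ℂ)*((a:ℂ)*I)) * Q.leadingCoeff
        - Complex.exp (-((b:ℂ)*I)) * Complex.exp (-((δ:ℂ)*((a:ℂ)*I))) * Q.leadingCoeff with hK
    have hdeg : ∀ ζ : ℂ, H ζ = Complex.exp ((δ:ℂ)*ζ) * K := by
      intro ζ
      rw [hH, hf, hf, haec, haec]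
      have e1 : (δ:ℂ)*(ζ + (a:ℂ)*I) - (γ:ℂ)*(ζ + (a:ℂ)*I)^2 = (δ:ℂ)*ζ + (δ:ℂ)*((a:ℂ)*I) := by
        rw [hγc]; ring
      have e2 : (δ:ℂ)*(ζ - (a:ℂ)*I) - (γ:ℂ)*(ζ - (a:ℂ)*I)^2 = (δ:ℂ)*ζ + -((δ:ℂ)*((a:ℂ)*I)) := by
        rw [hγc]; ring
      rw [e1, e2, Complex.exp_add, Complex.exp_add, hK]
      ring
    obtain ⟨z₀, hz₀⟩ := hH0
    have hK0 : K ≠ 0 := by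
      intro h
      apply hz₀
      rw [hdeg, h, mul_zero]
    have : H z ≠ 0 := by
      rw [hdeg]
      exact mul_ne_zero (Complex.exp_ne_zero _) hK0
    exact this hz
  · -- nondegenerate: roots nonempty or γ > 0
    have hside : (P.map (algebraMap ℝ ℂ)).roots ≠ 0 ∨ 0 < γ := by
      rcases eq_or_lt_of_le hγ with h | h
      · left; intro h0; exact hd ⟨h0, h.symm⟩
      · right; exact h
    rcases lt_or_gt_of_ne hyne with hneg | hpos
    · -- z.im < 0 : pass to conjugate
      have haevalc : ∀ ζ : ℂ,
          Polynomial.aeval ((starRingEnd ℂ) ζ) P = (starRingEnd ℂ) (Polynomial.aeval ζ P) := by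
        intro ζ
        have h := Polynomial.aeval_algHom_apply (Complex.conjAe) ζ P
        simpa [Complex.conjAe_coe] using h
      have hfconj : ∀ ζ : ℂ, f ((starRingEnd ℂ) ζ) = (starRingEnd ℂ) (f ζ) := by
        intro ζ
        rw [hf, hf, map_mul, ← Complex.exp_conj, ← haevalc]
        congr 2
        simp [map_sub, map_mul, map_pow, Complex.conj_ofReal]
      have e1 : (starRingEnd ℂ) z + (a:ℂ)*I = (starRingEnd ℂ) (z - (a:ℂ)*I) := by
        simp only [map_sub, map_mul, Complex.conj_ofReal, Complex.conj_I]
        ring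
      have e2 : (starRingEnd ℂ) z - (a:ℂ)*I = (starRingEnd ℂ) (z + (a:ℂ)*I) := by
        simp only [map_add, map_mul, Complex.conj_ofReal, Complex.conj_I]
        ring
      have hbconj : (starRingEnd ℂ) ((b:ℂ)*I) = -((b:ℂ)*I) := by
        simp only [map_mul, Complex.conj_ofReal, Complex.conj_I]
        ring
      have hHconj : H ((starRingEnd ℂ) z) = -((starRingEnd ℂ) (H z)) := by
        rw [hH, hH]
        rw [e1, e2, hfconj, hfconj, map_sub, map_mul, map_mul, ← Complex.exp_conj,
          ← Complex.exp_conj, hbconj, map_neg, hbconj]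
        ring
      have hz' : H ((starRingEnd ℂ) z) = 0 := by
        rw [hHconj, hz, map_zero, neg_zero]
      have him : ((starRingEnd ℂ) z).im = -z.im := Complex.conj_im z
      exact key_strip r a b γ δ ha hγ P hP hroots f H hf hH hside ((starRingEnd ℂ) z)
        (by rw [him]; linarith) (by rw [him]; nlinarith) hz'
    · exact key_strip r a b γ δ ha hγ P hP hroots f H hf hH hside z hpos hya hz
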